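/- Let n ≥ 2, c ∈ ℝ^n, η ∈ (0, 1/2), and A ∈ ℝ^{n×n} such that for every 1 ≤ i ≤ n there exists j ≠ i with a_{ij} ≠ 0. Suppose real numbers d_{i1}, d_{i2}, d_{i3} satisfy: d_{i1} < c_i − (As)_i and d_{i3} ≥ c_i − (As)_i for all s ∈ {0,1}^n, and d_{i2} = c_i − (1/2)·(A·1_n)_i, where 1_n is the all-ones vector. For a matrix M ∈ ℝ^{n×n} define q_M(i,s) := η·1_{[d_{i1} ≥ c_i − (Ms)_i]} + (1−2η)·1_{[d_{i2} ≥ c_i − (Ms)_i]} + η·1_{[d_{i3} ≥ c_i − (Ms)_i]}. Then there exists Â ∈ ℝ^{n×n} with Â ≠ A such that d_{i1} < c_i − (Âs)_i for all i and all s ∈ {0,1}^n, and q_Â(i,s) = q_A(i,s) for all 1 ≤ i ≤ n and all s ∈ {0,1}^n. -/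

import Mathlib

open Matrix

/-- The real value of a binary observation coordinate. -/
def bval (b : Bool) : ℝ := if b then 1 else 0

/-- **Non-identifiability under discrete disturbances** (Theorem 3′).
If each disturbance `D_{k,i}` takes the values `d_{i1}, d_{i2}, d_{i3}` with probabilities
`η, 1−2η, η`, with `d_{i1} < c_i − (As)_i ≤ d_{i3}` for all binary `s` and
`d_{i2} = c_i − (1/2)(A·1)_i`, and every row of `A` has a nonzero off-diagonal entry, then there
exists `Â ≠ A` with `d_{i1} < c_i − (Âs)_i` for all `i, s` yielding exactly the same
transition probabilities `q_M(i,s) = P{D_{k,i} ≥ c_i − (Ms)_i}`. -/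
theorem stmt5 (n : ℕ) (hn : 2 ≤ n)
    (A : Matrix (Fin n) (Fin n) ℝ) (c : Fin n → ℝ)
    (η : ℝ) (hη : η ∈ Set.Ioo (0 : ℝ) (1/2))
    (hA : ∀ i, ∃ j, j ≠ i ∧ A i j ≠ 0)
    (d1 d2 d3 : Fin n → ℝ)
    (hd1 : ∀ (i : Fin n) (s : Fin n → Bool), d1 i < c i - (A.mulVec (fun j => bval (s j))) i)
    (hd3 : ∀ (i : Fin n) (s : Fin n → Bool), c i - (A.mulVec (fun j => bval (s j))) i ≤ d3 i)
    (hd2 : ∀ i, d2 i = c i - (1/2) * (A.mulVec (fun _ => (1 : ℝ))) i)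
    (q : Matrix (Fin n) (Fin n) ℝ → Fin n → (Fin n → Bool) → ℝ)
    (hq : ∀ M i s, q M i s =
        η * (if c i - (M.mulVec (fun j => bval (s j))) i ≤ d1 i then 1 else 0)
      + (1 - 2 * η) * (if c i - (M.mulVec (fun j => bval (s j))) i ≤ d2 i then 1 else 0)
      + η * (if c i - (M.mulVec (fun j => bval (s j))) i ≤ d3 i then 1 else 0)) :
    ∃ Ahat : Matrix (Fin n) (Fin n) ℝ, Ahat ≠ A ∧
      (∀ (i : Fin n) (s : Fin n → Bool),
        d1 i < c i - (Ahat.mulVec (fun j => bval (s j))) i) ∧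
      (∀ (i : Fin n) (s : Fin n → Bool), q Ahat i s = q A i s) := by
  have hnpos : 0 < n := by omega
  set i₀ : Fin n := ⟨0, hnpos⟩ with hi₀
  set mv : (Fin n → Bool) → Fin n → ℝ := fun s => A.mulVec (fun j => bval (s j)) with hmv
  set e : ℝ := c i₀ - d2 i₀ with he
  set g : (Fin n → Bool) → ℝ := fun s =>
    min (c i₀ - d1 i₀ - mv s i₀) (if mv s i₀ < e then e - mv s i₀ else 1) with hg
  have hgpos : ∀ s, 0 < g s := by
    intro s
    refine lt_min ?_ ?_
    · linarith [hd1 i₀ s]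
    · split <;> linarith
  have hne : (Finset.univ : Finset (Fin n → Bool)).Nonempty := Finset.univ_nonempty
  set δ : ℝ := Finset.univ.inf' hne g with hδ
  have hδpos : 0 < δ := by
    rw [hδ, Finset.lt_inf'_iff]
    intro s _; exact hgpos s
  have hδle : ∀ s, δ ≤ g s := fun s => Finset.inf'_le g (Finset.mem_univ s)
  set t : ℝ := δ / (2 * n) with ht
  have htpos : 0 < t := by
    apply div_pos hδpos
    positivity
  have hS0 : ∀ s : Fin n → Bool, (0:ℝ) ≤ ∑ j, bval (s j) := by
    intro s
    apply Finset.sum_nonneg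
    intro j _
    unfold bval; split <;> norm_num
  have hSn : ∀ s : Fin n → Bool, (∑ j, bval (s j)) ≤ n := by
    intro s
    calc (∑ j, bval (s j)) ≤ ∑ _j : Fin n, (1:ℝ) := by
          apply Finset.sum_le_sum
          intro j _
          unfold bval; split <;> norm_num
      _ = n := by simp
  have hkey : ∀ s : Fin n → Bool, t * (∑ j, bval (s j)) < δ := by
    intro s
    have h1 : t * (∑ j, bval (s j)) ≤ t * n := by
      apply mul_le_mul_of_nonneg_left (hSn s) (le_of_lt htpos)
    have h2 : t * n = δ / 2 := by
      rw [ht]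
      field_simp
    linarith
  have htS0 : ∀ s : Fin n → Bool, 0 ≤ t * (∑ j, bval (s j)) := by
    intro s
    exact mul_nonneg (le_of_lt htpos) (hS0 s)
  have hmul : ∀ (s : Fin n → Bool) (i : Fin n),
      Matrix.mulVec (fun i j => A i j + if i = i₀ then t else 0) (fun j => bval (s j)) i
        = mv s i + (if i = i₀ then t else 0) * ∑ j, bval (s j) := by
    intro s i
    simp only [Matrix.mulVec, dotProduct, hmv, add_mul, Finset.sum_add_distrib,
      Finset.mul_sum]
  have hmul0 : ∀ (s : Fin n → Bool),
      Matrix.mulVec (fun i j => A i j + if i = i₀ then t else 0) (fun j => bval (s j)) i₀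
        = mv s i₀ + t * ∑ j, bval (s j) := by
    intro s
    rw [hmul s i₀, if_pos rfl]
  have hmulne : ∀ (s : Fin n → Bool) (i : Fin n), i ≠ i₀ →
      Matrix.mulVec (fun i j => A i j + if i = i₀ then t else 0) (fun j => bval (s j)) i
        = mv s i := by
    intro s i hi
    rw [hmul s i, if_neg hi, zero_mul, add_zero]
  have hd1' : ∀ (i : Fin n) (s : Fin n → Bool), d1 i < c i - mv s i := hd1
  have hd3' : ∀ (i : Fin n) (s : Fin n → Bool), c i - mv s i ≤ d3 i := hd3
  refine ⟨fun i j => A i j + if i = i₀ then t else 0, ?_, ?_, ?_⟩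
  · intro h
    have := congrFun (congrFun h i₀) i₀
    simp at this
    linarith
  · -- d1 strictness
    intro i s
    by_cases hi : i = i₀
    · subst hi
      rw [hmul0]
      have h1 : δ ≤ c i₀ - d1 i₀ - mv s i₀ := le_trans (hδle s) (min_le_left _ _)
      have := hkey s
      linarith
    · rw [hmulne s i hi]
      exact hd1' i s
  · -- q equality
    intro i s
    refine (hq _ i s).trans ?_; rw [hq]
    by_cases hi : i = i₀
    · subst hi
      rw [hmul0]
      have h1 : δ ≤ c i₀ - d1 i₀ - mv s i₀ := le_trans (hδle s) (min_le_left _ _)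
      have h2 : δ ≤ if mv s i₀ < e then e - mv s i₀ else 1 :=
        le_trans (hδle s) (min_le_right _ _)
      have hk := hkey s
      have hk0 := htS0 s
      have hd1'' := hd1' i₀ s
      have hd3'' := hd3' i₀ s
      have heq : e = c i₀ - d2 i₀ := he
      have hmveq : mv s i₀ = (A.mulVec fun j => bval (s j)) i₀ := rfl
      congr 1
      · congr 1
        · -- d1 indicators: both false
          rw [if_neg (by linarith), if_neg (by linarith)]
        · -- d2 indicators
          by_cases hcase : mv s i₀ < e
          · rw [if_pos hcase] at h2
            rw [if_neg (by linarith), if_neg (by linarith)]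
          · push_neg at hcase
            rw [if_pos (by linarith), if_pos (by linarith)]
      · -- d3 indicators: both true
        rw [if_pos (by linarith), if_pos (by linarith)]
    · rw [hmulne s i hi]
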